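/- If ν − αₙ > 0 and ψ = 0, then w̄ = 0 is the unique local maximizer of g(w) = (1/2)((1/2)‖w‖² − ν)² + (1/2)wᵀDw. -/

import Mathlib

open Finset

theorem stmt15 {n : ℕ} (hn : 1 ≤ n) (α : Fin n → ℝ) (hα : Monotone α) (ν : ℝ)
    (hν : 0 < ν - α ⟨n - 1, by omega⟩)
    (g : (Fin n → ℝ) → ℝ)
    (hg : ∀ w, g w = (1/2) * ((1/2) * ∑ i, (w i)^2 - ν)^2
        + (1/2) * ∑ i, α i * (w i)^2) :
    IsLocalMax g 0 ∧ ∀ w : Fin n → ℝ, IsLocalMax g w → w = 0 := by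
  set L : Fin n := ⟨n - 1, by omega⟩ with hL
  have hαL : ∀ j : Fin n, α j ≤ α L := by
    intro j
    apply hα
    rw [Fin.le_def]
    have := j.isLt
    simp only [hL]
    omega
  set A := α L with hA
  set K := ν - A with hK
  constructor
  · -- 0 is a local max
    set ε : ℝ := min 1 (4 * K / n) with hε
    have hn1 : (1 : ℝ) ≤ (n : ℝ) := by exact_mod_cast hn
    have hεpos : 0 < ε := by
      apply lt_min one_pos
      positivity
    rw [IsLocalMax, IsMaxFilter, Metric.eventually_nhds_iff]
    refine ⟨ε, hεpos, ?_⟩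
    intro x hx
    have hxj : ∀ j, (x j) ^ 2 ≤ ε ^ 2 := by
      intro j
      have h1 : dist (x j) ((0 : Fin n → ℝ) j) < ε := lt_of_le_of_lt (dist_le_pi_dist x 0 j) hx
      have h2 : |x j| < ε := by simpa [Real.dist_eq] using h1
      calc (x j)^2 = |x j|^2 := (sq_abs _).symm
        _ ≤ ε ^ 2 := by nlinarith [abs_nonneg (x j)]
    set s := ∑ j, (x j) ^ 2 with hs
    have hs0 : 0 ≤ s := Finset.sum_nonneg fun j _ => sq_nonneg _
    have hsle : s ≤ 4 * K := by
      have h1 : s ≤ ∑ _j : Fin n, ε ^ 2 := Finset.sum_le_sum fun j _ => hxj j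
      have h2 : (∑ _j : Fin n, ε ^ 2) = (n : ℝ) * ε ^ 2 := by
        rw [Finset.sum_const, Finset.card_univ, Fintype.card_fin, nsmul_eq_mul]
      have hε1 : ε ≤ 1 := min_le_left _ _
      have hε2 : ε ≤ 4 * K / n := min_le_right _ _
      have h3 : (n : ℝ) * ε ^ 2 ≤ (n : ℝ) * ε := by
        apply mul_le_mul_of_nonneg_left _ (by linarith)
        nlinarith [hεpos]
      have h4 : (n : ℝ) * ε ≤ 4 * K := by
        have h5 := mul_le_mul_of_nonneg_left hε2 (by linarith : (0:ℝ) ≤ (n:ℝ))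
        calc (n:ℝ) * ε ≤ (n:ℝ) * (4 * K / n) := h5
          _ = 4 * K := by field_simp
      linarith
    have hsum : ∑ j, α j * (x j) ^ 2 ≤ A * s := by
      rw [hs, Finset.mul_sum]
      exact Finset.sum_le_sum fun j _ =>
        mul_le_mul_of_nonneg_right (hαL j) (sq_nonneg _)
    rw [hg x, hg 0]
    simp only [Pi.zero_apply]
    have hfin : (1/2 : ℝ) * ((1/2) * s - ν)^2 + (1/2) * (A * s) ≤
        (1/2) * ((1/2) * ∑ _i : Fin n, (0:ℝ)^2 - ν)^2
        + (1/2) * ∑ _i : Fin n, α _i * (0:ℝ)^2 := by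
      simp only [ne_eq, OfNat.ofNat_ne_zero, not_false_eq_true, zero_pow, mul_zero,
        Finset.sum_const_zero, zero_sub, add_zero]
      have hKs : 0 ≤ s * (4 * K - s) := mul_nonneg hs0 (by linarith)
      nlinarith [hKs]
    calc (1/2 : ℝ) * ((1/2) * s - ν)^2 + (1/2) * ∑ j, α j * (x j)^2
        ≤ (1/2 : ℝ) * ((1/2) * s - ν)^2 + (1/2) * (A * s) := by linarith
      _ ≤ _ := hfin
  · -- uniqueness
    intro w hmax
    by_contra hw
    obtain ⟨i, hi⟩ : ∃ i, w i ≠ 0 := by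
      by_contra h
      push_neg at h
      exact hw (funext h)
    obtain ⟨ε, hεpos, hball⟩ := Metric.eventually_nhds_iff.mp hmax
    set s := ∑ j, (w j) ^ 2 with hs
    set c : ℝ := (1/2) * s - ν + α i with hc
    have hwi : 0 < |w i| := abs_pos.mpr hi
    set δ : ℝ := min ε |w i| / 2 with hδ
    have hδpos : 0 < δ := by
      apply div_pos _ two_pos
      exact lt_min hεpos hwi
    have hδε : δ < ε := by
      have : min ε |w i| ≤ ε := min_le_left _ _
      linarith
    have hδw : 2 * δ ≤ |w i| := by
      have : min ε |w i| ≤ |w i| := min_le_right _ _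
      linarith
    clear_value s c δ
    obtain ⟨t, htor, htcw⟩ : ∃ t : ℝ, (t = δ ∨ t = -δ) ∧ 0 ≤ (c * w i) * t := by
      by_cases h : 0 ≤ c * w i
      · exact ⟨δ, Or.inl rfl, mul_nonneg h hδpos.le⟩
      · push_neg at h
        exact ⟨-δ, Or.inr rfl,
          mul_nonneg_of_nonpos_of_nonpos h.le (neg_nonpos.mpr hδpos.le)⟩
    have htabs : |t| = δ := by
      rcases htor with h | h <;> rw [h]
      · exact abs_of_pos hδpos
      · rw [abs_neg]; exact abs_of_pos hδpos
    have hrange : -δ ≤ t ∧ t ≤ δ := abs_le.mp htabs.le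
    set x : Fin n → ℝ := Function.update w i (w i + t) with hx
    have hdist : dist x w < ε := by
      rw [dist_pi_lt_iff hεpos]
      intro j
      by_cases hj : j = i
      · subst hj
        rw [hx, Function.update_self, Real.dist_eq, add_sub_cancel_left, htabs]
        exact hδε
      · rw [hx, Function.update_of_ne hj]
        simpa using hεpos
    have hgle : g x ≤ g w := hball hdist
    -- sum computations
    have hsum : ∀ (cf : Fin n → ℝ), ∑ j, cf j * (x j) ^ 2
        = (∑ j, cf j * (w j) ^ 2) + cf i * (2 * t * w i + t ^ 2) := by
      intro cf
      have h1 : ∑ j, (cf j * (x j) ^ 2 - cf j * (w j) ^ 2)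
          = cf i * (2 * t * w i + t ^ 2) := by
        rw [Finset.sum_eq_single i]
        · rw [hx, Function.update_self]; ring
        · intro j _ hj
          rw [hx, Function.update_of_ne hj]; ring
        · intro h; exact absurd (Finset.mem_univ i) h
      have h2 : ∑ j, (cf j * (x j) ^ 2 - cf j * (w j) ^ 2)
          = (∑ j, cf j * (x j) ^ 2) - ∑ j, cf j * (w j) ^ 2 :=
        Finset.sum_sub_distrib _ _
      linarith [h1, h2.symm]
    have hs2 : ∑ j, (x j) ^ 2 = s + (2 * t * w i + t ^ 2) := by
      rw [hs]
      simpa using hsum (fun _ => 1)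
    set p : ℝ := t * (w i + t / 2) with hp
    have hkey : g x = g w + c * p + p ^ 2 / 2 := by
      rw [hg x, hg w, hs2, hsum α, hc, hp, ← hs]
      ring
    clear_value p
    have ht0 : t ≠ 0 := by
      intro h
      rw [h, abs_zero] at htabs
      linarith
    have hwit : w i + t / 2 ≠ 0 := by
      intro h
      have h2 : |w i| = δ / 2 := by
        rw [show w i = -(t/2) by linarith, abs_neg, abs_div, htabs, abs_two]
      rw [h2] at hδw
      linarith
    have hpne : p ≠ 0 := by rw [hp]; exact mul_ne_zero ht0 hwit
    -- c * p ≥ 0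
    rw [mul_right_comm c (w i) t] at htcw
    have hcp : 0 ≤ c * p := by
      rw [hp, ← mul_assoc]
      rcases lt_trichotomy (w i) 0 with hneg | hz | hpos
      · have habs : |w i| = -(w i) := abs_of_neg hneg
        rw [habs] at hδw
        have hfac : w i + t / 2 < 0 := by linarith [hrange.2]
        have hct : c * t ≤ 0 := by
          by_contra hcc
          push_neg at hcc
          exact absurd htcw (not_le.mpr (mul_neg_of_pos_of_neg hcc hneg))
        exact mul_nonneg_of_nonpos_of_nonpos hct hfac.le
      · exact absurd hz hi
      · have habs : |w i| = w i := abs_of_pos hpos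
        rw [habs] at hδw
        have hfac : 0 < w i + t / 2 := by linarith [hrange.1]
        have hct : 0 ≤ c * t := by
          by_contra hcc
          push_neg at hcc
          exact absurd htcw (not_le.mpr (mul_neg_of_neg_of_pos hcc hpos))
        exact mul_nonneg hct hfac.le
    have hp2 : 0 < p ^ 2 := pow_two_pos_of_ne_zero hpne
    rw [hkey] at hgle
    linarith
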